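/- For structures A, B and tuples a ∈ V(A)^k, b ∈ V(B)^k: if (A, a) and (B, b) satisfy the same FO⁺ formulas of q-rank at most ℓ, then for all i, j ∈ [k], either dist^A(a_i, a_j) = dist^B(b_i, b_j), or both distances exceed f_q(ℓ) = (4q)^{q+ℓ}. -/

import Mathlib

open FirstOrder FirstOrder.Language

/-- The Gaifman graph of an `L`-structure: two distinct elements are adjacent if
they occur together in a tuple of some relation. -/
def gaifman (L : Language) (M : Type*) [L.Structure M] : SimpleGraph M where
  Adj a b := a ≠ b ∧ ∃ (n : ℕ) (R : L.Relations n) (t : Fin n → M),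
    Structure.RelMap R t ∧ (∃ i, t i = a) ∧ (∃ j, t j = b)
  symm := by
    constructor
    rintro a b ⟨hab, n, R, t, hR, hi, hj⟩
    exact ⟨hab.symm, n, R, t, hR, hj, hi⟩
  loopless := by constructor; rintro a ⟨h, -⟩; exact h rfl

/-- Syntax of the logic FO⁺: first-order logic over `L` with free variables among
`Fin n`, extended by atomic distance formulas `dist(x,y) ≤ d`. -/
inductive FOp (L : Language) : ℕ → Type _
  | eq {n : ℕ} (i j : Fin n) : FOp L n
  | rel {n l : ℕ} (R : L.Relations l) (t : Fin l → Fin n) : FOp L n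
  | distLe {n : ℕ} (i j : Fin n) (d : ℕ) : FOp L n
  | not {n : ℕ} (φ : FOp L n) : FOp L n
  | or {n : ℕ} (φ ψ : FOp L n) : FOp L n
  | ex {n : ℕ} (φ : FOp L (n + 1)) : FOp L n

/-- Semantics of FO⁺; distance atoms are interpreted via Gaifman-graph distance. -/
def FOp.Realize {L : Language} {M : Type*} [L.Structure M] :
    ∀ {n : ℕ}, FOp L n → (Fin n → M) → Prop
  | _, .eq i j, a => a i = a j
  | _, .rel R t, a => Structure.RelMap R (fun l => a (t l))
  | _, .distLe i j d, a => (gaifman L M).edist (a i) (a j) ≤ (d : ℕ∞)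
  | _, .not φ, a => ¬ φ.Realize a
  | _, .or φ ψ, a => φ.Realize a ∨ ψ.Realize a
  | _, .ex φ, a => ∃ x : M, φ.Realize (Fin.snoc a x)

/-- `φ.QRankLe q ℓ`: the formula `φ` has `q`-rank at most `ℓ`: its quantifier rank
is at most `ℓ` and every distance atom `dist(x,y) ≤ d` occurring in the scope of
`i` quantifiers satisfies `d ≤ (4q)^(q+ℓ-i)`. -/
def FOp.QRankLe {L : Language} (q : ℕ) : ℕ → ∀ {n : ℕ}, FOp L n → Prop
  | _, _, .eq _ _ => True
  | _, _, .rel _ _ => True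
  | ℓ, _, .distLe _ _ d => d ≤ (4 * q) ^ (q + ℓ)
  | ℓ, _, .not φ => φ.QRankLe q ℓ
  | ℓ, _, .or φ ψ => φ.QRankLe q ℓ ∧ ψ.QRankLe q ℓ
  | 0, _, .ex _ => False
  | (ℓ + 1), _, .ex φ => φ.QRankLe q ℓ

/-- `(A,a) ≡⁺_{q,ℓ} (B,b)`: the tuples satisfy the same FO⁺ formulas of `q`-rank
at most `ℓ`. -/
def EquivPlus {L : Language} (q ℓ : ℕ) {M N : Type*} [L.Structure M] [L.Structure N]
    {k : ℕ} (a : Fin k → M) (b : Fin k → N) : Prop :=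
  ∀ φ : FOp L k, φ.QRankLe q ℓ → (φ.Realize a ↔ φ.Realize b)


/-- If `(A,a)` and `(B,b)` satisfy the same FO⁺ formulas of `q`-rank
at most `ℓ`, then for all `i, j`, either the Gaifman distances of `(a i, a j)` and
`(b i, b j)` agree, or both exceed `f_q(ℓ) = (4q)^(q+ℓ)`. -/
theorem equivPlus_dist {L : Language} {M N : Type*} [L.Structure M] [L.Structure N]
    {k q ℓ : ℕ} (a : Fin k → M) (b : Fin k → N)
    (h : EquivPlus (L := L) q ℓ a b) (i j : Fin k) :
    (gaifman L M).edist (a i) (a j) = (gaifman L N).edist (b i) (b j) ∨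
    ((((4 * q) ^ (q + ℓ) : ℕ) : ℕ∞) < (gaifman L M).edist (a i) (a j) ∧
     (((4 * q) ^ (q + ℓ) : ℕ) : ℕ∞) < (gaifman L N).edist (b i) (b j)) := by
  set f : ℕ := (4 * q) ^ (q + ℓ) with hf
  have key : ∀ d : ℕ, d ≤ f →
      ((gaifman L M).edist (a i) (a j) ≤ (d : ℕ∞) ↔
       (gaifman L N).edist (b i) (b j) ≤ (d : ℕ∞)) := by
    intro d hd
    exact h (FOp.distLe i j d) (by cases ℓ <;> simpa [FOp.QRankLe, hf] using hd)
  by_cases hA : (gaifman L M).edist (a i) (a j) ≤ (f : ℕ∞)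
  · left
    have hB : (gaifman L N).edist (b i) (b j) ≤ (f : ℕ∞) := (key f le_rfl).mp hA
    lift (gaifman L M).edist (a i) (a j) to ℕ using (ne_top_of_le_ne_top (by simp) hA) with m hm
    lift (gaifman L N).edist (b i) (b j) to ℕ using (ne_top_of_le_ne_top (by simp) hB) with n hn
    have hmf : m ≤ f := by exact_mod_cast hA
    have hnf : n ≤ f := by exact_mod_cast hB
    have h1 : m ≤ n := by exact_mod_cast (key n hnf).mpr le_rfl
    have h2 : n ≤ m := by exact_mod_cast (key m hmf).mp le_rfl
    exact_mod_cast le_antisymm h1 h2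
  · right
    have hB : ¬ (gaifman L N).edist (b i) (b j) ≤ (f : ℕ∞) := fun hb => hA ((key f le_rfl).mpr hb)
    exact ⟨lt_of_not_ge hA, lt_of_not_ge hB⟩
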